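/- Let A be a multiset of positive integers containing 1 (with multiplicity at least one). For every n ≥ 1 and every real x ≥ 1, one has f_{A,n}(x) ≤ f_{A,n+1}(x), and for x > 1 strictly f_{A,n}(x) < f_{A,n+1}(x). -/

import Mathlib

open scoped Classical

/-- Sum of those divisors of `j` that belong to the multiset of positive integers
with multiplicity function `μ`, counted with multiplicity: `σ_A(j) = ∑_{d ∣ j} d·μ(d)`. -/
noncomputable def sigmaA (μ : ℕ → ℕ) (j : ℕ) : ℕ := ∑ d ∈ Nat.divisors j, d * μ d

/-- The polynomials `f_{A,n}(x)` associated with the multiset of positive integers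
with multiplicity function `μ`, defined (equivalently to the generating function
`∑ f_{A,n}(x) qⁿ = ∏_{a∈A} (1/(1-q^a))^x`) by `f_{A,0} = 1` and the recurrence
`f_{A,n}(x) = (x/n) ∑_{j=1}^{n} σ_A(j) f_{A,n-j}(x)`. -/
noncomputable def fA (μ : ℕ → ℕ) : ℕ → ℝ → ℝ
  | 0, _ => 1
  | n + 1, x =>
      x / (n + 1) * ∑ j ∈ Finset.range (n + 1), (sigmaA μ (j + 1) : ℝ) * fA μ (n - j) x
  decreasing_by exact Nat.lt_succ_of_le (Nat.sub_le n j)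

/-- `f_{A,n}(x)` for an ordinary set `A` of positive integers. -/
noncomputable def fS (A : Set ℕ) : ℕ → ℝ → ℝ := fA (fun a => if a ∈ A then 1 else 0)

lemma fA_zero (μ : ℕ → ℕ) (x : ℝ) : fA μ 0 x = 1 := by rw [fA]

lemma fA_succ (μ : ℕ → ℕ) (n : ℕ) (x : ℝ) :
    fA μ (n + 1) x
      = x / (n + 1) * ∑ j ∈ Finset.range (n + 1), (sigmaA μ (j + 1) : ℝ) * fA μ (n - j) x := by
  rw [fA]

lemma fA_succ' (μ : ℕ → ℕ) (n : ℕ) (x : ℝ) :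
    ((n:ℝ) + 1) * fA μ (n + 1) x
      = x * ∑ j ∈ Finset.range (n + 1), (sigmaA μ (j + 1) : ℝ) * fA μ (n - j) x := by
  rw [fA_succ]
  have h : ((n:ℝ) + 1) ≠ 0 := by positivity
  field_simp

lemma sigmaA_one_le (μ : ℕ → ℕ) (hμ1 : 1 ≤ μ 1) (j : ℕ) (hj : j ≠ 0) : 1 ≤ sigmaA μ j := by
  have h1 : 1 ∈ Nat.divisors j := Nat.one_mem_divisors.mpr hj
  have h2 : 1 * μ 1 ≤ ∑ d ∈ Nat.divisors j, d * μ d :=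
    Finset.single_le_sum (f := fun d => d * μ d) (fun d _ => Nat.zero_le _) h1
  have h3 : 1 ≤ 1 * μ 1 := by omega
  exact le_trans h3 (by simpa [sigmaA] using h2)

lemma fA_nonneg (μ : ℕ → ℕ) (x : ℝ) (hx : 0 ≤ x) (n : ℕ) : 0 ≤ fA μ n x := by
  induction n using Nat.strong_induction_on with
  | _ n ih =>
    cases n with
    | zero => rw [fA_zero]; norm_num
    | succ m =>
      rw [fA_succ]
      apply mul_nonneg
      · positivity
      · apply Finset.sum_nonneg
        intro j hj
        exact mul_nonneg (by positivity) (ih (m - j) (Nat.lt_succ_of_le (Nat.sub_le m j)))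

lemma fA_pos (μ : ℕ → ℕ) (hμ1 : 1 ≤ μ 1) (x : ℝ) (hx : 0 < x) (n : ℕ) : 0 < fA μ n x := by
  cases n with
  | zero => rw [fA_zero]; norm_num
  | succ m =>
    rw [fA_succ]
    apply mul_pos (by positivity)
    apply Finset.sum_pos'
    · intro j hj
      exact mul_nonneg (by positivity) (fA_nonneg μ x hx.le _)
    · refine ⟨m, Finset.self_mem_range_succ m, ?_⟩
      have h0 : m - m = 0 := Nat.sub_self m
      rw [h0, fA_zero, mul_one]
      have := sigmaA_one_le μ hμ1 (m + 1) (Nat.succ_ne_zero m)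
      exact_mod_cast Nat.lt_of_lt_of_le Nat.zero_lt_one this

lemma fA_mono (μ : ℕ → ℕ) (hμ1 : 1 ≤ μ 1) (x : ℝ) (hx : 1 ≤ x) (n : ℕ) :
    fA μ n x ≤ fA μ (n + 1) x ∧ (1 < x → fA μ n x < fA μ (n + 1) x) := by
  have hx0 : (0:ℝ) < x := lt_of_lt_of_le one_pos hx
  induction n using Nat.strong_induction_on with
  | _ n ih =>
    cases n with
    | zero =>
      have h1 : fA μ 1 x = x * μ 1 := by
        rw [fA_succ]
        simp [sigmaA, Nat.divisors_one, fA_zero]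
      have hm : (1:ℝ) ≤ (μ 1 : ℝ) := by exact_mod_cast hμ1
      rw [fA_zero, h1]
      constructor
      · nlinarith
      · intro hx1; nlinarith
    | succ k =>
      set a := fA μ (k + 1) x with ha_def
      set S1 := ∑ j ∈ Finset.range (k + 2), (sigmaA μ (j + 1) : ℝ) * fA μ (k + 1 - j) x with hS1_def
      set S0 := ∑ j ∈ Finset.range (k + 1), (sigmaA μ (j + 1) : ℝ) * fA μ (k - j) x with hS0_def
      have h1 : ((k:ℝ) + 2) * fA μ (k + 2) x = x * S1 := by
        have := fA_succ' μ (k + 1) x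
        push_cast at this ⊢
        rw [hS1_def]
        convert this using 2 <;> push_cast <;> ring
      have h0 : ((k:ℝ) + 1) * a = x * S0 := by
        have := fA_succ' μ k x
        rw [ha_def, hS0_def]
        exact this
      -- telescoping
      have htel : ∑ j ∈ Finset.range (k + 1), (fA μ (k + 1 - j) x - fA μ (k - j) x)
          = a - 1 := by
        have hrefl := Finset.sum_range_reflect (fun i => fA μ (i + 1) x - fA μ i x) (k + 1)
        simp only [Nat.add_sub_cancel] at hrefl
        have h2 : ∑ j ∈ Finset.range (k + 1), (fA μ (k + 1 - j) x - fA μ (k - j) x)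
            = ∑ j ∈ Finset.range (k + 1), (fA μ (k - j + 1) x - fA μ (k - j) x) := by
          apply Finset.sum_congr rfl
          intro j hj
          have hjk := Finset.mem_range.mp hj
          have he : k + 1 - j = k - j + 1 := by omega
          rw [he]
        have hts := Finset.sum_range_sub (fun i => fA μ i x) (k + 1)
        rw [h2, hrefl, hts, fA_zero, ha_def]
      have hstep : S0 + (a - 1) ≤ ∑ j ∈ Finset.range (k + 1), (sigmaA μ (j + 1) : ℝ) * fA μ (k + 1 - j) x := by
        rw [← htel, ← Finset.sum_add_distrib]
        apply Finset.sum_le_sum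
        intro j hj
        have hjk := Finset.mem_range.mp hj
        have hσ : (1:ℝ) ≤ (sigmaA μ (j + 1) : ℝ) := by
          exact_mod_cast sigmaA_one_le μ hμ1 (j + 1) (Nat.succ_ne_zero j)
        have hab : fA μ (k - j) x ≤ fA μ (k + 1 - j) x := by
          have hlt : k - j < k + 1 := Nat.lt_succ_of_le (Nat.sub_le k j)
          have := (ih (k - j) hlt).1
          have heq : (k - j) + 1 = k + 1 - j := by omega
          rwa [heq] at this
        nlinarith
      have hlast : S1 = (∑ j ∈ Finset.range (k + 1), (sigmaA μ (j + 1) : ℝ) * fA μ (k + 1 - j) x)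
          + (sigmaA μ (k + 2) : ℝ) := by
        rw [hS1_def, Finset.sum_range_succ]
        have h0' : k + 1 - (k + 1) = 0 := Nat.sub_self (k + 1)
        rw [h0', fA_zero, mul_one]
      have hσk : (1:ℝ) ≤ (sigmaA μ (k + 2) : ℝ) := by
        exact_mod_cast sigmaA_one_le μ hμ1 (k + 2) (by omega)
      have hS : a + S0 ≤ S1 := by rw [hlast]; linarith
      have hxS : x * (a + S0) ≤ x * S1 := mul_le_mul_of_nonneg_left hS hx0.le
      have hmul : ((k:ℝ) + 2) * (fA μ (k + 2) x - a) ≥ (x - 1) * a := by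
        nlinarith
      have ha0 : 0 ≤ a := fA_nonneg μ x hx0.le (k + 1)
      constructor
      · nlinarith
      · intro hx1
        have hap : 0 < a := fA_pos μ hμ1 x hx0 (k + 1)
        nlinarith

/-- If 1 is in A then for every n >= 1 and real x >= 1, f_{A,n}(x) <= f_{A,n+1}(x), with strict inequality for x > 1. -/
theorem stmt_4 (μ : ℕ → ℕ) (hμ0 : μ 0 = 0) (hμ1 : 1 ≤ μ 1) (n : ℕ) (hn : 1 ≤ n) (x : ℝ) (hx : 1 ≤ x) :
    fA μ n x ≤ fA μ (n + 1) x ∧ (1 < x → fA μ n x < fA μ (n + 1) x) :=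
  fA_mono μ hμ1 x hx n
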